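/- The number of t-ary trees with n nodes equals (1/((t-1)n+1)) * binomial(tn, n), for all n ≥ 0 and t > 1. -/

import Mathlib

/-- A `t`-ary tree: either empty, or a root node with `t` ordered subtrees. -/
inductive TAry (t : ℕ) : Type where
  | nil : TAry t
  | node : (Fin t → TAry t) → TAry t

namespace TAry

variable {t : ℕ}

/-- Number of nodes of a `t`-ary tree. -/
def size : TAry t → ℕ
  | nil => 0
  | node c => 1 + ∑ i, (c i).size

/-- Sum over nodes of `d +` (depth of the node). -/
def plFrom : TAry t → ℕ → ℕ
  | nil, _ => 0
  | node c, d => d + ∑ i, (c i).plFrom (d + 1)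

/-- Path length: the sum of the depths of all nodes. -/
def pathLength (T : TAry t) : ℕ := T.plFrom 0

/-- Number of nodes at depth `j` (the profile `D_j`). -/
def depthCount : ℕ → TAry t → ℕ
  | _, nil => 0
  | 0, node _ => 1
  | j + 1, node c => ∑ i, depthCount j (c i)

/-- Number of leaves (nodes all of whose subtrees are empty). -/
def leaves : TAry t → ℕ
  | nil => 0
  | node c => max 1 (∑ i, (c i).leaves)

end TAry

namespace TAry
variable {t : ℕ}

/-- Every internal (non-leaf) node has exactly one child. -/
def chain : TAry t → Prop
  | nil => True
  | node c => (∀ i, c i = nil) ∨ ∃ i, c i ≠ nil ∧ chain (c i) ∧ ∀ j, j ≠ i → c j = nil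

/-- Number of leaves at depth `j`. -/
def leavesAt : ℕ → TAry t → ℕ
  | _, nil => 0
  | 0, node c => if (∑ i, (c i).size) = 0 then 1 else 0
  | j + 1, node c => ∑ i, leavesAt j (c i)

/-- The subtree of `T` at position `pos` (empty tree if the position is invalid). -/
def getAt : TAry t → List (Fin t) → TAry t
  | T, [] => T
  | nil, _ :: _ => nil
  | node c, i :: rest => getAt (c i) rest

/-- Replace the subtree of `T` at position `pos` by `τ`. -/
def replaceAt : TAry t → List (Fin t) → TAry t → TAry t
  | _, [], τ => τ
  | nil, _ :: _, _ => nil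
  | node c, i :: rest, τ => node (fun j => if j = i then replaceAt (c i) rest τ else c j)

/-- Attach the trees `τs i` at the positions `pos i`, for `i = 0, …, ℓ-1`. -/
def attachAll {ℓ : ℕ} (T : TAry t) (pos : Fin ℓ → List (Fin t)) (τs : Fin ℓ → TAry t) :
    TAry t :=
  (List.finRange ℓ).foldl (fun A i => replaceAt A (pos i) (τs i)) T

end TAry

/-- The binary entropy function (natural logarithm). -/
noncomputable def binEnt (x : ℝ) : ℝ := -x * Real.log x - (1 - x) * Real.log (1 - x)

/-- Number of `t`-ary trees with exactly `n` nodes. -/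
noncomputable def Ct (t n : ℕ) : ℕ := Nat.card {T : TAry t // T.size = n}

/-- Number of `t`-ary trees with path length exactly `p`. -/
noncomputable def Tt (t p : ℕ) : ℕ := Nat.card {T : TAry t // T.pathLength = p}

namespace TreeCount
open List

variable {t : ℕ}

/-- Balance of a boolean word: each `true` has weight `t-1`, each `false` weight `-1`. -/
def bal (t : ℕ) (w : List Bool) : ℤ := t * (w.count true : ℤ) - w.length

@[simp] lemma bal_nil : bal t [] = 0 := by simp [bal]

lemma bal_append (a b : List Bool) : bal t (a ++ b) = bal t a + bal t b := by
  simp [bal]; push_cast; ring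

lemma bal_true_cons (w : List Bool) : bal t (true :: w) = ((t : ℤ) - 1) + bal t w := by
  simp [bal, List.count_cons]; push_cast; ring

lemma bal_false_cons (w : List Bool) : bal t (false :: w) = -1 + bal t w := by
  simp [bal, List.count_cons]; push_cast; ring

lemma neg_length_le_bal (w : List Bool) : -(w.length : ℤ) ≤ bal t w := by
  have : (0:ℤ) ≤ t * (w.count true : ℤ) := by positivity
  simp only [bal]; omega

/-- Domination: every proper prefix has nonnegative balance. -/
def Dom (t : ℕ) (w : List Bool) : Prop := ∀ p, p <+: w → p ≠ w → 0 ≤ bal t p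

/-- A balanced word: dominated with total balance `-1`. -/
def Bal (t : ℕ) (w : List Bool) : Prop := Dom t w ∧ bal t w = -1

lemma Bal.ne_nil {w : List Bool} (h : Bal t w) : w ≠ [] := by
  intro hw; rw [hw] at h; simpa [Bal] using h.2

/-- Preorder encoding of a `t`-ary tree. -/
def encode : TAry t → List Bool
  | .nil => [false]
  | .node c => true :: (List.ofFn fun i => encode (c i)).flatten

@[simp] lemma encode_nil : encode (.nil : TAry t) = [false] := rfl

lemma encode_node (c : Fin t → TAry t) :
    encode (.node c) = true :: (List.ofFn fun i => encode (c i)).flatten := rfl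

lemma count_encode (T : TAry t) : (encode T).count true = T.size := by
  induction T with
  | nil => simp [TAry.size]
  | node c ih =>
      simp [encode_node, TAry.size, List.count_flatten, List.map_ofFn, Function.comp_def,
        List.sum_ofFn, ih, add_comm]

lemma length_encode (T : TAry t) : (encode T).length = t * T.size + 1 := by
  induction T with
  | nil => simp [TAry.size]
  | node c ih =>
      simp [encode_node, TAry.size, List.length_flatten, List.map_ofFn, Function.comp_def,
        List.sum_ofFn, ih, Finset.sum_add_distrib, Finset.mul_sum, mul_add]
      ring

lemma bal_encode (T : TAry t) : bal t (encode T) = -1 := by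
  simp [bal, length_encode, count_encode]

lemma prefix_append_cases : ∀ {a p b : List Bool}, p <+: a ++ b →
    p <+: a ∨ ∃ q, q <+: b ∧ p = a ++ q
  | [], p, b, h => .inr ⟨p, h, rfl⟩
  | x :: a, [], b, _ => .inl (nil_prefix)
  | x :: a, y :: p, b, h => by
    rw [cons_append, cons_prefix_cons] at h
    obtain ⟨rfl, h⟩ := h
    rcases prefix_append_cases h with h' | ⟨q, hq, rfl⟩
    · exact .inl (by rw [cons_prefix_cons]; exact ⟨rfl, h'⟩)
    · exact .inr ⟨q, hq, rfl⟩

lemma bal_flatten {L : List (List Bool)} (hL : ∀ B ∈ L, Bal t B) :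
    bal t L.flatten = -(L.length : ℤ) := by
  induction L with
  | nil => simp
  | cons B L ih =>
      rw [flatten_cons, bal_append, (hL B (by simp)).2, ih (fun B hB => hL B (by simp [hB]))]
      push_cast [List.length_cons]; ring

lemma bal_prefix_flatten {L : List (List Bool)} (hL : ∀ B ∈ L, Bal t B) :
    ∀ p, p <+: L.flatten → p = L.flatten ∨ -(L.length : ℤ) < bal t p := by
  induction L with
  | nil => intro p hp; left; simpa using hp.eq_of_length (by simpa using hp.length_le)
  | cons B L ih =>
      intro p hp
      rw [flatten_cons] at hp
      rcases prefix_append_cases hp with h' | ⟨q, hq, rfl⟩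
      · rcases eq_or_ne p B with rfl | hne
        · cases L with
          | nil => left; simp
          | cons C M => right; rw [(hL p (by simp)).2]; push_cast [List.length_cons]; omega
        · right
          have := (hL B (by simp)).1 p h' hne
          push_cast [List.length_cons]; omega
      · rcases ih (fun C hC => hL C (by simp [hC])) q hq with rfl | h
        · left; rw [flatten_cons]
        · right
          rw [bal_append, (hL B (by simp)).2]
          push_cast [List.length_cons] at h ⊢; omega

lemma encode_bal (T : TAry t) : Bal t (encode T) := by
  induction T with
  | nil =>
      refine ⟨?_, bal_encode _⟩
      intro p hp hne
      simp only [encode_nil] at hp hne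
      match p, hp, hne with
      | [], _, _ => simp
      | x :: p, hp, hne =>
          rw [cons_prefix_cons] at hp
          obtain ⟨rfl, hp⟩ := hp
          simp only [prefix_nil] at hp
          exact absurd (by rw [hp]) hne
  | node c ih =>
      have hL : ∀ B ∈ (List.ofFn fun i => encode (c i)), Bal t B := by
        intro B hB
        obtain ⟨i, rfl⟩ := List.mem_ofFn.mp hB
        exact ih i
      refine ⟨?_, bal_encode _⟩
      intro p hp hne
      simp only [encode_node] at hp hne
      match p, hp, hne with
      | [], _, _ => simp
      | x :: p, hp, hne =>
          rw [cons_prefix_cons] at hp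
          obtain ⟨rfl, hp⟩ := hp
          rcases bal_prefix_flatten hL p hp with rfl | h
          · exact absurd rfl hne
          · rw [bal_true_cons]
            simp only [List.length_ofFn] at h
            omega

lemma Bal.eq_of_append {B C u v : List Bool} (hB : Bal t B) (hC : Bal t C)
    (h : B ++ u = C ++ v) : B = C := by
  have key : ∀ {B C : List Bool} {u v : List Bool}, Bal t B → Bal t C →
      B ++ u = C ++ v → B.length ≤ C.length → B = C := by
    intro B C u v hB hC h hlen
    have hpre : B <+: C := by
      have h1 : B <+: C ++ v := h ▸ List.prefix_append B u
      exact List.prefix_of_prefix_length_le h1 (List.prefix_append C v) hlen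
    rcases eq_or_ne B C with rfl | hne
    · rfl
    · exact absurd (hC.1 B hpre hne) (by rw [hB.2]; norm_num)
  rcases le_total B.length C.length with hl | hl
  · exact key hB hC h hl
  · exact (key hC hB h.symm hl).symm

lemma flatten_inj : ∀ {L M : List (List Bool)}, (∀ B ∈ L, Bal t B) → (∀ B ∈ M, Bal t B) →
    L.flatten = M.flatten → L = M
  | [], [], _, _, _ => rfl
  | [], C :: M, _, hM, h => by
      simp only [List.flatten_nil, List.flatten_cons] at h
      exact absurd (List.append_eq_nil_iff.mp h.symm).1 (hM C (by simp)).ne_nil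
  | B :: L, [], hL, _, h => by
      simp only [List.flatten_nil, List.flatten_cons] at h
      exact absurd (List.append_eq_nil_iff.mp h).1 (hL B (by simp)).ne_nil
  | B :: L, C :: M, hL, hM, h => by
      simp only [flatten_cons] at h
      obtain rfl : B = C := (hL B (by simp)).eq_of_append (hM C (by simp)) h
      rw [flatten_inj (fun X hX => hL X (by simp [hX])) (fun X hX => hM X (by simp [hX]))
        (List.append_cancel_left h)]

lemma encode_injective : ∀ {T T' : TAry t}, encode T = encode T' → T = T'
  | .nil, .nil, _ => rfl
  | .nil, .node c, h => by simp [encode_node] at h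
  | .node c, .nil, h => by simp [encode_node] at h
  | .node c, .node c', h => by
      simp only [encode_node, List.cons.injEq, true_and] at h
      have h2 := flatten_inj (L := List.ofFn fun i => encode (c i))
        (M := List.ofFn fun i => encode (c' i))
        (fun B hB => by
          obtain ⟨i, rfl⟩ := List.mem_ofFn.mp hB; exact encode_bal _)
        (fun B hB => by
          obtain ⟨i, rfl⟩ := List.mem_ofFn.mp hB; exact encode_bal _)
        h
      have h3 := List.ofFn_injective h2
      exact congrArg TAry.node (funext fun i => encode_injective (congrFun h3 i))

lemma exists_blocks : ∀ (k : ℕ) (v : List Bool), bal t v = -(k : ℤ) →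
    (∀ p, p <+: v → p ≠ v → -(k : ℤ) < bal t p) →
    ∃ L : List (List Bool), L.length = k ∧ (∀ B ∈ L, Bal t B) ∧ L.flatten = v := by
  intro k
  induction k with
  | zero =>
      intro v hv hp
      rcases eq_or_ne v [] with rfl | hne
      · exact ⟨[], rfl, by simp, rfl⟩
      · exact absurd (hp [] (List.nil_prefix) (Ne.symm hne)) (by norm_num)
  | succ k ih =>
      intro v hv hp
      have hPex : ∃ j, bal t (v.take j) ≤ -1 := by
        refine ⟨v.length, ?_⟩
        rw [List.take_length, hv]; push_cast; omega
      set j₀ := Nat.find hPex with hj₀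
      have hspec : bal t (v.take j₀) ≤ -1 := Nat.find_spec hPex
      have hmin : ∀ j < j₀, 0 ≤ bal t (v.take j) := by
        intro j hj
        have := Nat.find_min hPex hj
        omega
      have hj₀len : j₀ ≤ v.length := Nat.find_le (by rw [List.take_length, hv]; push_cast; omega)
      have hj₀pos : 0 < j₀ := by
        rcases Nat.eq_zero_or_pos j₀ with h0 | h
        · exfalso; rw [h0] at hspec; simp at hspec
        · exact h
      have hbB : bal t (v.take j₀) = -1 := by
        have hstep : bal t (v.take j₀) ≥ bal t (v.take (j₀ - 1)) - 1 := by
          have : j₀ = (j₀ - 1) + 1 := by omega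
          rw [this, List.take_add, bal_append]
          have h1 : -(((v.drop (j₀-1)).take 1).length : ℤ) ≤ bal t ((v.drop (j₀-1)).take 1) :=
            neg_length_le_bal _
          have h2 : ((v.drop (j₀-1)).take 1).length ≤ 1 := by
            simpa using List.length_take_le 1 _
          push_cast at h1 h2 ⊢
          omega
        have := hmin (j₀ - 1) (by omega)
        omega
      set B := v.take j₀ with hB
      set u := v.drop j₀ with hu
      have hvBu : B ++ u = v := List.take_append_drop _ _
      have hBbal : Bal t B := by
        refine ⟨?_, hbB⟩
        intro p hpB hne
        have hplen : p.length < j₀ := by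
          have h1 : p.length ≤ B.length := hpB.length_le
          have h2 : B.length = j₀ := by rw [hB, List.length_take]; omega
          rcases lt_or_eq_of_le (h2 ▸ h1) with h | h
          · exact h
          · exact absurd (hpB.eq_of_length (by omega)) hne
        have hpv : p = v.take p.length := by
          have : p <+: v := hpB.trans (hvBu ▸ List.prefix_append B u)
          exact List.prefix_iff_eq_take.mp this
        rw [hpv]
        exact hmin _ hplen
      have hubal : bal t u = -(k : ℤ) := by
        have := bal_append (t := t) B u
        rw [hvBu, hv, hbB] at this
        push_cast at this ⊢
        omega
      have hup : ∀ q, q <+: u → q ≠ u → -(k : ℤ) < bal t q := by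
        intro q hq hne
        obtain ⟨s, hs⟩ := hq
        have h1 : B ++ q <+: v := by
          rw [← hvBu, ← hs]
          exact ⟨s, by rw [List.append_assoc]⟩
        have h2 : B ++ q ≠ v := by
          intro h
          rw [← hvBu] at h
          exact hne (by simpa using List.append_cancel_left h)
        have := hp _ h1 h2
        rw [bal_append (t := t), hbB] at this
        push_cast at this ⊢
        omega
      obtain ⟨L, hLlen, hLbal, hLflat⟩ := ih u hubal hup
      exact ⟨B :: L, by simp [hLlen], by
        rintro X hX
        rcases List.mem_cons.mp hX with rfl | hX
        · exact hBbal
        · exact hLbal X hX, by rw [flatten_cons, hLflat, hvBu]⟩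

lemma exists_tree : ∀ (N : ℕ) (w : List Bool), w.length ≤ N → Bal t w →
    ∃ T : TAry t, encode T = w := by
  intro N
  induction N with
  | zero =>
      intro w hw hB
      have hw0 : w = [] := List.length_eq_zero_iff.mp (by omega)
      subst hw0
      exact absurd hB.ne_nil (by simp)
  | succ N ih =>
      intro w hw hB
      match w with
      | [] => exact absurd hB.ne_nil (by simp)
      | false :: v =>
          rcases eq_or_ne v [] with rfl | hne
          · exact ⟨.nil, rfl⟩
          · exfalso
            have h1 : [false] <+: false :: v := ⟨v, rfl⟩
            have h2 : [false] ≠ false :: v := by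
              intro h
              exact hne (by simpa using h.symm)
            have := hB.1 _ h1 h2
            rw [bal_false_cons] at this
            simp at this
      | true :: v =>
          have hvbal : bal t v = -(t : ℤ) := by
            have := hB.2
            rw [bal_true_cons] at this
            omega
          have hvp : ∀ p, p <+: v → p ≠ v → -(t : ℤ) < bal t p := by
            intro p hpv hne
            have h1 : true :: p <+: true :: v := by rw [List.cons_prefix_cons]; exact ⟨rfl, hpv⟩
            have h2 : true :: p ≠ true :: v := by simpa using hne
            have := hB.1 _ h1 h2
            rw [bal_true_cons] at this
            omega
          obtain ⟨L, hLlen, hLbal, hLflat⟩ := exists_blocks t v hvbal hvp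
          have hmem : ∀ i : Fin t, L.get (Fin.cast hLlen.symm i) ∈ L := fun i => by
            rw [List.get_eq_getElem]; exact List.getElem_mem _
          have hBlen : ∀ B ∈ L, B.length ≤ N := by
            intro B hBm
            have h1 : B.length ≤ v.length := by
              rw [← hLflat, List.length_flatten]
              exact List.le_sum_of_mem (List.mem_map_of_mem hBm)
            have h2 : v.length ≤ N := by simpa using hw
            omega
          have hex : ∀ i : Fin t, ∃ T : TAry t, encode T = L.get (Fin.cast hLlen.symm i) :=
            fun i => ih _ (hBlen _ (hmem i)) (hLbal _ (hmem i))
          refine ⟨.node (fun i => Classical.choose (hex i)), ?_⟩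
          rw [encode_node]
          congr 1
          rw [← hLflat]
          congr 1
          refine List.ext_get (by simp [hLlen]) ?_
          intro i h1 h2
          rw [List.get_ofFn]
          rw [Classical.choose_spec (hex _)]
          congr 1

lemma dom_iff_take (w : List Bool) : Dom t w ↔ ∀ j < w.length, 0 ≤ bal t (w.take j) := by
  constructor
  · intro h j hj
    refine h _ (List.take_prefix _ _) ?_
    intro hEq
    have h3 : (w.take j).length = j := by rw [List.length_take]; omega
    rw [hEq] at h3
    omega
  · intro h p hp hne
    have hlen : p.length < w.length := by
      rcases lt_or_eq_of_le hp.length_le with h' | h'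
      · exact h'
      · exact absurd (hp.eq_of_length h') hne
    rw [List.prefix_iff_eq_take.mp hp]
    exact h _ hlen

lemma bal_rotate (w : List Bool) (r : ℕ) : bal t (w.rotate r) = bal t w := by
  have hp : w.rotate r ~ w := List.rotate_perm w r
  simp [bal, hp.count_eq, hp.length_eq]

lemma not_dom_rotate {v : List Bool} (hv : Dom t v) (hbal : bal t v = -1) {s : ℕ}
    (h0 : 0 < s) (hs : s < v.length) : ¬ Dom t (v.rotate s) := by
  intro hd
  have hr : v.rotate s = v.drop s ++ v.take s := List.rotate_eq_drop_append_take hs.le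
  have hpre : v.drop s <+: v.rotate s := by rw [hr]; exact List.prefix_append _ _
  have hne : v.drop s ≠ v.rotate s := by
    intro h
    have := congrArg List.length h
    rw [List.length_rotate, List.length_drop] at this
    omega
  have h1 := hd _ hpre hne
  have h2 : 0 ≤ bal t (v.take s) := (dom_iff_take v).mp hv s hs
  have h3 : bal t (v.take s) + bal t (v.drop s) = -1 := by
    rw [← bal_append, List.take_append_drop, hbal]
  omega

lemma exists_dom_rotate (w : List Bool) (hw : bal t w = -1) :
    ∃ r, r < w.length ∧ Dom t (w.rotate r) := by
  have hlenpos : 0 < w.length := by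
    rcases w with _ | ⟨b, v⟩
    · simp at hw
    · simp
  have hflen : bal t (w.take w.length) = -1 := by rw [List.take_length, hw]
  have hSne : ((Finset.range (w.length + 1)).image (fun j => bal t (w.take j))).Nonempty :=
    ⟨_, Finset.mem_image_of_mem _ (Finset.mem_range.mpr (by omega : 0 < w.length + 1))⟩
  set M := ((Finset.range (w.length + 1)).image (fun j => bal t (w.take j))).min' hSne with hMdef
  have hMle : ∀ j, j ≤ w.length → M ≤ bal t (w.take j) := fun j hj =>
    Finset.min'_le _ _ (Finset.mem_image_of_mem _ (Finset.mem_range.mpr (by omega)))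
  have hMmem : ∃ j, j ≤ w.length ∧ bal t (w.take j) = M := by
    obtain ⟨j, hj, hfj⟩ := Finset.mem_image.mp (Finset.min'_mem _ hSne)
    exact ⟨j, by have := Finset.mem_range.mp hj; omega, hfj⟩
  set ρ := Nat.find hMmem with hρdef
  obtain ⟨hρlen, hρM⟩ : ρ ≤ w.length ∧ bal t (w.take ρ) = M := Nat.find_spec hMmem
  have hρlt : ∀ j, j < ρ → M + 1 ≤ bal t (w.take j) := by
    intro j hj
    have h1 : M ≤ bal t (w.take j) := hMle j (by omega)
    have h2 := Nat.find_min hMmem hj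
    have h3 : bal t (w.take j) ≠ M := fun hF => h2 ⟨by omega, hF⟩
    omega
  have hM1 : M ≤ -1 := by
    have := hMle w.length le_rfl
    omega
  have hρpos : 0 < ρ := by
    rcases Nat.eq_zero_or_pos ρ with h0 | h
    · exfalso; rw [h0] at hρM; simp at hρM; omega
    · exact h
  rcases eq_or_lt_of_le hρlen with hρeq | hρlt2
  · refine ⟨0, hlenpos, ?_⟩
    rw [List.rotate_zero]
    rw [dom_iff_take]
    intro j hj
    have := hρlt j (by omega)
    have hMval : M = -1 := by rw [← hρM, hρeq, hflen]
    omega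
  · refine ⟨ρ, hρlt2, (dom_iff_take _).mpr ?_⟩
    intro j hj
    rw [List.length_rotate] at hj
    have hrot : w.rotate ρ = w.drop ρ ++ w.take ρ := List.rotate_eq_drop_append_take (by omega)
    rcases le_or_gt j (w.length - ρ) with hcase | hcase
    · have hdlen : j ≤ (w.drop ρ).length := by rw [List.length_drop]; omega
      rw [hrot, List.take_append_of_le_length hdlen]
      have hsplit : bal t (w.take (ρ + j)) = bal t (w.take ρ) + bal t ((w.drop ρ).take j) := by
        rw [List.take_add, bal_append]
      have h1 : M ≤ bal t (w.take (ρ + j)) := hMle _ (by omega)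
      omega
    · have hlen2 : j = (w.drop ρ).length + (j - (w.length - ρ)) := by
        rw [List.length_drop]; omega
      rw [hrot, hlen2, List.take_append, List.take_take, Nat.add_sub_cancel_left,
        List.take_of_length_le (Nat.le_add_right _ _),
        min_eq_left (by omega : j - (w.length - ρ) ≤ ρ), bal_append]
      have hdrop : bal t (w.take ρ) + bal t (w.drop ρ) = -1 := by
        rw [← bal_append, List.take_append_drop, hw]
      have h1 : M + 1 ≤ bal t (w.take (j - (w.length - ρ))) := hρlt _ (by omega)
      omega

lemma cycle (w : List Bool) (hw : bal t w = -1) :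
    ∃! r, r < w.length ∧ Dom t (w.rotate r) := by
  obtain ⟨r, hr, hdom⟩ := exists_dom_rotate w hw
  refine ⟨r, ⟨hr, hdom⟩, ?_⟩
  rintro r' ⟨hr', hdom'⟩
  by_contra hne
  have key : ∀ a b, a < b → b < w.length → Dom t (w.rotate a) → Dom t (w.rotate b) → False := by
    intro a b hab hb hda hdb
    have h1 : (w.rotate a).rotate (b - a) = w.rotate b := by
      rw [List.rotate_rotate]
      congr 1
      omega
    have hbal2 : bal t (w.rotate a) = -1 := by rw [bal_rotate]; exact hw
    have := not_dom_rotate hda hbal2 (s := b - a) (by omega)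
      (by rw [List.length_rotate]; omega)
    rw [h1] at this
    exact this hdb
  rcases lt_or_gt_of_ne hne with h | h
  · exact key r' r h hr hdom' hdom
  · exact key r r' h hr' hdom hdom'

lemma sum_map_ite (w : List Bool) :
    (w.map (fun b => if b = true then (1:ℕ) else 0)).sum = w.count true := by
  induction w with
  | nil => simp
  | cons a l ih => cases a <;> simp [List.count_cons, ih] <;> omega

lemma card_filter_get (w : List Bool) {m : ℕ} (hl : w.length = m) :
    (Finset.univ.filter (fun i : Fin m => w.get (Fin.cast hl.symm i) = true)).card
      = w.count true := by
  subst hl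
  rw [Finset.card_filter, ← sum_map_ite]
  rw [← List.sum_ofFn (f := fun i : Fin w.length =>
    if w.get (Fin.cast rfl i) = true then (1:ℕ) else 0)]
  congr 1
  have hfn : (fun i : Fin w.length => if w.get (Fin.cast rfl i) = true then (1:ℕ) else 0)
      = ((fun b => if b = true then (1:ℕ) else 0) ∘ w.get) := rfl
  rw [hfn, ← List.map_ofFn, List.ofFn_get]

def listFun (m k : ℕ) : {w : List Bool // w.length = m ∧ w.count true = k} ≃
    {f : Fin m → Bool // (Finset.univ.filter (fun i => f i = true)).card = k} where
  toFun w := ⟨fun i => w.1.get (Fin.cast w.2.1.symm i), by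
    rw [card_filter_get w.1 w.2.1, w.2.2]⟩
  invFun f := ⟨List.ofFn f.1, by
    refine ⟨by simp, ?_⟩
    have hlen : (List.ofFn f.1).length = m := by simp
    have hcg : (Finset.univ.filter
        (fun i : Fin m => (List.ofFn f.1).get (Fin.cast hlen.symm i) = true)) =
        Finset.univ.filter (fun i => f.1 i = true) := by
      apply Finset.filter_congr
      intro i _
      rw [List.get_ofFn]
      exact iff_of_eq (congrArg (fun b => b = true) (congrArg f.1 (Fin.ext rfl)))
    rw [← card_filter_get (List.ofFn f.1) hlen, hcg, f.2]⟩
  left_inv w := by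
    apply Subtype.ext
    refine List.ext_get (by simp [w.2.1]) ?_
    intro i h1 h2
    rw [List.get_ofFn]
    exact congrArg w.1.get (Fin.ext rfl)
  right_inv f := by
    apply Subtype.ext
    funext i
    dsimp only
    rw [List.get_ofFn]
    exact congrArg f.1 (Fin.ext rfl)

def funFinset (m k : ℕ) :
    {f : Fin m → Bool // (Finset.univ.filter (fun i => f i = true)).card = k} ≃
    {s : Finset (Fin m) // s.card = k} where
  toFun f := ⟨Finset.univ.filter (fun i => f.1 i = true), f.2⟩
  invFun s := ⟨fun i => i ∈ s.1, by simpa using s.2⟩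
  left_inv f := Subtype.ext (funext fun i => by simp)
  right_inv s := Subtype.ext (by simp)

lemma card_words (m k : ℕ) :
    Nat.card {w : List Bool // w.length = m ∧ w.count true = k} = m.choose k := by
  rw [Nat.card_congr ((listFun m k).trans (funFinset m k))]
  simp [Nat.card_eq_fintype_card, Fintype.card_finset_len]

lemma trees_equiv (t n : ℕ) :
    Nat.card {T : TAry t // T.size = n} =
    Nat.card {w : List Bool // w.length = t*n+1 ∧ w.count true = n ∧ Dom t w} := by
  apply Nat.card_congr
  refine Equiv.ofBijective (fun T => ⟨encode T.1, by rw [length_encode, T.2],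
    by rw [count_encode, T.2], (encode_bal T.1).1⟩) ⟨?_, ?_⟩
  · intro T T' h
    exact Subtype.ext (encode_injective (congrArg Subtype.val h))
  · rintro ⟨w, h1, h2, h3⟩
    have hb : Bal t w := ⟨h3, by simp [bal, h1, h2]⟩
    obtain ⟨T, hT⟩ := exists_tree w.length w le_rfl hb
    have hc := count_encode T
    rw [hT, h2] at hc
    exact ⟨⟨T, hc.symm⟩, Subtype.ext hT⟩

lemma card_words_eq (t n : ℕ) :
    Nat.card {w : List Bool // w.length = t*n+1 ∧ w.count true = n} =
    Nat.card {w : List Bool // w.length = t*n+1 ∧ w.count true = n ∧ Dom t w} * (t*n+1) := by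
  set m := t*n+1 with hm
  have hbal : ∀ w : List Bool, w.length = m → w.count true = n → bal t w = -1 := by
    intro w h1 h2
    simp [bal, h1, h2, hm]
  have hφ : ∀ (v : {w : List Bool // w.length = m ∧ w.count true = n ∧ Dom t w}) (r : Fin m),
      (v.1.rotate (m - r.1)).length = m ∧ (v.1.rotate (m - r.1)).count true = n := by
    intro v r
    exact ⟨by rw [List.length_rotate]; exact v.2.1,
      by rw [(List.rotate_perm _ _).count_eq]; exact v.2.2.1⟩
  set φ : {w : List Bool // w.length = m ∧ w.count true = n ∧ Dom t w} × Fin m →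
      {w : List Bool // w.length = m ∧ w.count true = n} :=
    fun p => ⟨p.1.1.rotate (m - p.2.1), hφ p.1 p.2⟩ with hφdef
  have hrotback : ∀ (v : {w : List Bool // w.length = m ∧ w.count true = n ∧ Dom t w})
      (r : Fin m), (v.1.rotate (m - r.1)).rotate r.1 = v.1 := by
    intro v r
    rw [List.rotate_rotate]
    have h2 : m - r.1 + r.1 = m := by omega
    rw [h2]
    have h3 : v.1.rotate v.1.length = v.1 := List.rotate_length v.1
    rw [v.2.1] at h3
    exact h3
  have hbij : Function.Bijective φ := by
    constructor
    · rintro ⟨v, r⟩ ⟨v', r'⟩ h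
      have hval : v.1.rotate (m - r.1) = v'.1.rotate (m - r'.1) := congrArg Subtype.val h
      have hwlen : (v.1.rotate (m - r.1)).length = m := by
        rw [List.length_rotate]; exact v.2.1
      have hwbal : bal t (v.1.rotate (m - r.1)) = -1 := by
        rw [bal_rotate]; exact hbal v.1 v.2.1 v.2.2.1
      obtain ⟨ρ, _, huniq⟩ := cycle _ hwbal
      have hd1 : Dom t ((v.1.rotate (m - r.1)).rotate r.1) := by
        rw [hrotback v r]; exact v.2.2.2
      have hd2 : Dom t ((v.1.rotate (m - r.1)).rotate r'.1) := by
        rw [hval, hrotback v' r']; exact v'.2.2.2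
      have hr2 := r.2
      have hr'2 := r'.2
      have he1 : r.1 = ρ := huniq r.1 ⟨by omega, hd1⟩
      have he2 : r'.1 = ρ := huniq r'.1 ⟨by omega, hd2⟩
      have hrr : r = r' := Fin.ext (by rw [he1, he2])
      have hvv : v = v' := Subtype.ext (by
        rw [← hrotback v r, ← hrotback v' r', ← hval, hrr])
      rw [hrr, hvv]
    · rintro ⟨w, h1, h2⟩
      obtain ⟨r, ⟨hr, hdom⟩, _⟩ := cycle w (hbal w h1 h2)
      rw [h1] at hr
      refine ⟨⟨⟨w.rotate r, by rw [List.length_rotate]; exact h1,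
        by rw [(List.rotate_perm _ _).count_eq]; exact h2, hdom⟩, ⟨r, hr⟩⟩, ?_⟩
      apply Subtype.ext
      show (w.rotate r).rotate (m - r) = w
      rw [List.rotate_rotate, show r + (m - r) = m by omega,
        show m = w.length from h1.symm, List.rotate_length]
  rw [← Nat.card_congr (Equiv.ofBijective φ hbij), Nat.card_prod]
  simp [Nat.card_eq_fintype_card]

theorem main_count (t n : ℕ) (ht : 1 < t) :
    Nat.card {T : TAry t // T.size = n} = Nat.choose (t * n) n / ((t - 1) * n + 1) := by
  have hX : Nat.card {T : TAry t // T.size = n} * (t*n+1) = (t*n+1).choose n := by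
    rw [trees_equiv t n, ← card_words_eq t n, card_words]
  have hkey : (t-1)*n + n = t*n := by
    have ht1 : t - 1 + 1 = t := by omega
    calc (t-1)*n + n = ((t-1)+1)*n := by ring
      _ = t*n := by rw [ht1]
  have hnle : n ≤ t*n := by omega
  have e1 : (t*n).choose ((t-1)*n) = (t*n).choose n := by
    rw [show (t-1)*n = t*n - n by omega]
    exact Nat.choose_symm hnle
  have e2 : (t*n+1).choose ((t-1)*n+1) = (t*n+1).choose n := by
    rw [show (t-1)*n+1 = (t*n+1) - n by omega]
    exact Nat.choose_symm (by omega)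
  have hid : (t*n+1) * (t*n).choose n = ((t-1)*n+1) * (t*n+1).choose n := by
    have := Nat.add_one_mul_choose_eq (t*n) ((t-1)*n)
    rw [e1, e2] at this
    rw [this, Nat.mul_comm]
  have hfin : (t*n).choose n = Nat.card {T : TAry t // T.size = n} * ((t-1)*n+1) := by
    have hpos : 0 < t*n+1 := by omega
    apply Nat.eq_of_mul_eq_mul_left hpos
    calc (t*n+1) * (t*n).choose n = ((t-1)*n+1) * (t*n+1).choose n := hid
      _ = ((t-1)*n+1) * (Nat.card {T : TAry t // T.size = n} * (t*n+1)) := by rw [hX]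
      _ = (t*n+1) * (Nat.card {T : TAry t // T.size = n} * ((t-1)*n+1)) := by ring
  rw [hfin]
  exact (Nat.mul_div_cancel _ (by omega)).symm

end TreeCount

/-- The number of `t`-ary trees with `n` nodes equals `(1/((t-1)n+1)) * binomial(tn, n)`
(the division is exact). -/
theorem stmt0 (t n : ℕ) (ht : 1 < t) :
    Nat.card {T : TAry t // T.size = n} = Nat.choose (t * n) n / ((t - 1) * n + 1) :=
  TreeCount.main_count t n ht
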